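/- Let X = ∏_{i=1}^∞ {0,1} with the product σ-algebra, and for each i let μ_i be the measure on {0,1} with μ_i({0}) = 1/2 + γ_i and μ_i({1}) = 1/2 − γ_i, where |γ_i| < 1/2 and Σ_i |γ_i| < ∞. Let μ = ⊗_i μ_i and let M = ⊗_i ν_i where ν_i({0}) = ν_i({1}) = 1/2. Then μ and M are mutually absolutely continuous (equivalent measures). -/

import Mathlib

open MeasureTheory

/-- The cylinder set of sequences in `∏ {0,1}` agreeing with `s` on the first `n`
coordinates. -/
def cylEvent (s : ℕ → Bool) (n : ℕ) : Set (ℕ → Bool) := {x | ∀ i < n, x i = s i}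

/-- The weight of the `i`-th coordinate: `μ_i({0}) = 1/2 + γ_i`, `μ_i({1}) = 1/2 − γ_i`
(identifying `0 ↔ false`, `1 ↔ true`). -/
noncomputable def wt (γ : ℕ → ℝ) (i : ℕ) (b : Bool) : ℝ :=
  if b then 1/2 - γ i else 1/2 + γ i

/-! ### Auxiliary definitions -/

noncomputable def klg (γ : ℕ → ℝ) (x : ℕ → Bool) (i : ℕ) : ℝ := Real.log (2 * wt γ i (x i))

noncomputable def kfE (γ : ℕ → ℝ) (x : ℕ → Bool) : ENNReal :=
  ENNReal.ofReal (Real.exp (∑' i, klg γ x i))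

noncomputable def kr (γ : ℕ → ℝ) (i : ℕ) : ℝ := -Real.log (1 - 2 * |γ i|)

noncomputable def kRt (γ : ℕ → ℝ) (m : ℕ) : ℝ := ∑' i, kr γ (i + m)

/-! ### Basic facts about `wt` -/

lemma wt_pos {γ : ℕ → ℝ} {i : ℕ} (hγi : |γ i| < 1/2) (b : Bool) : 0 < wt γ i b := by
  rcases abs_lt.mp hγi with ⟨h1, h2⟩
  cases b <;> simp only [wt, if_true, if_false, Bool.false_eq_true] <;> linarith

lemma wt_le {γ : ℕ → ℝ} (i : ℕ) (b : Bool) : wt γ i b ≤ 1/2 + |γ i| := by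
  have h1 := le_abs_self (γ i)
  have h2 := neg_abs_le (γ i)
  cases b <;> simp only [wt, if_true, if_false, Bool.false_eq_true] <;> linarith

lemma wt_ge {γ : ℕ → ℝ} (i : ℕ) (b : Bool) : 1/2 - |γ i| ≤ wt γ i b := by
  have h1 := le_abs_self (γ i)
  have h2 := neg_abs_le (γ i)
  cases b <;> simp only [wt, if_true, if_false, Bool.false_eq_true] <;> linarith

lemma wt_false_add_true (γ : ℕ → ℝ) (i : ℕ) : wt γ i false + wt γ i true = 1 := by
  simp only [wt, if_true, if_false, Bool.false_eq_true]; ring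

/-! ### Bounds on the logs -/

lemma kr_nonneg {γ : ℕ → ℝ} {i : ℕ} (hγi : |γ i| < 1/2) : 0 ≤ kr γ i := by
  have h1 : 0 < 1 - 2 * |γ i| := by linarith
  have h2 : 1 - 2 * |γ i| ≤ 1 := by have := abs_nonneg (γ i); linarith
  have := Real.log_nonpos (le_of_lt h1) h2
  simp only [kr]; linarith

lemma klg_abs_le {γ : ℕ → ℝ} {i : ℕ} (hγi : |γ i| < 1/2) (x : ℕ → Bool) :
    |klg γ x i| ≤ kr γ i := by
  have h1 : 0 < 1 - 2 * |γ i| := by linarith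
  have hlo : 1 - 2 * |γ i| ≤ 2 * wt γ i (x i) := by have := wt_ge (γ := γ) i (x i); linarith
  have hhi : 2 * wt γ i (x i) ≤ 1 + 2 * |γ i| := by have := wt_le (γ := γ) i (x i); linarith
  have hpos : 0 < 2 * wt γ i (x i) := lt_of_lt_of_le h1 hlo
  rw [abs_le]
  constructor
  · have := Real.log_le_log h1 hlo
    simp only [klg, kr]; linarith
  · have h2 : Real.log (2 * wt γ i (x i)) ≤ Real.log (1 + 2 * |γ i|) :=
      Real.log_le_log hpos hhi
    have h3 : Real.log (1 + 2 * |γ i|) + Real.log (1 - 2 * |γ i|) ≤ 0 := by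
      rw [← Real.log_mul (by linarith) (by linarith)]
      apply Real.log_nonpos
      · nlinarith [abs_nonneg (γ i)]
      · nlinarith [abs_nonneg (γ i)]
    simp only [klg, kr]; linarith

lemma neg_log_one_sub_le {u : ℝ} (h0 : 0 ≤ u) (h1 : u ≤ 1/2) : -Real.log (1 - u) ≤ 2 * u := by
  have hpos : 0 < 1 - u := by linarith
  have h := Real.log_le_sub_one_of_pos (inv_pos.mpr hpos)
  rw [Real.log_inv] at h
  have h2 : (1 - u)⁻¹ ≤ 1 + 2 * u := by
    rw [inv_eq_one_div, div_le_iff₀ hpos]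
    nlinarith
  linarith

lemma kr_summable {γ : ℕ → ℝ} (hγ : ∀ i, |γ i| < 1/2) (hsum : Summable fun i => |γ i|) :
    Summable (kr γ) := by
  have h0 : Filter.Tendsto (fun i => |γ i|) Filter.atTop (nhds 0) := hsum.tendsto_atTop_zero
  have hev : ∀ᶠ i in Filter.atTop, |γ i| < 1/4 :=
    h0.eventually_lt_const (by norm_num)
  obtain ⟨N, hN⟩ := Filter.eventually_atTop.mp hev
  rw [← summable_nat_add_iff N]
  apply Summable.of_nonneg_of_le (fun k => kr_nonneg (hγ (k + N)))
    (fun k => ?_) (((summable_nat_add_iff N).mpr hsum).mul_left 4)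
  have h4 : |γ (k + N)| < 1/4 := hN (k + N) (Nat.le_add_left N k)
  have := neg_log_one_sub_le (u := 2 * |γ (k + N)|)
    (by positivity) (by linarith)
  simp only [kr]
  linarith

lemma klg_summable {γ : ℕ → ℝ} (hγ : ∀ i, |γ i| < 1/2) (hsum : Summable fun i => |γ i|)
    (x : ℕ → Bool) : Summable (klg γ x) := by
  apply Summable.of_abs
  exact Summable.of_nonneg_of_le (fun i => abs_nonneg _) (fun i => klg_abs_le (hγ i) x)
    (kr_summable hγ hsum)

/-! ### Measurability and structure of cylinders -/

lemma measurableSet_cylEvent (s : ℕ → Bool) (n : ℕ) : MeasurableSet (cylEvent s n) := by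
  have : cylEvent s n = ⋂ i ∈ Finset.range n, {x : ℕ → Bool | x i = s i} := by
    ext x; simp [cylEvent]
  rw [this]
  apply MeasurableSet.biInter (Finset.range n).countable_toSet
  intro i _
  show MeasurableSet ((fun x : ℕ → Bool => x i) ⁻¹' {s i})
  exact measurable_pi_apply i (MeasurableSet.singleton (s i))

lemma cyl_inter {s t : ℕ → Bool} {n m : ℕ} (hnm : n ≤ m)
    (h : (cylEvent s n ∩ cylEvent t m).Nonempty) :
    cylEvent s n ∩ cylEvent t m = cylEvent t m := by
  obtain ⟨x, hxs, hxt⟩ := h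
  apply Set.inter_eq_self_of_subset_right
  intro y hy i hi
  rw [hy i (lt_of_lt_of_le hi hnm), ← hxt i (lt_of_lt_of_le hi hnm), hxs i hi]

lemma isPiSystem_cyl : IsPiSystem {S : Set (ℕ → Bool) | ∃ s n, S = cylEvent s n} := by
  rintro _ ⟨s, n, rfl⟩ _ ⟨t, m, rfl⟩ hne
  rcases le_total n m with h | h
  · exact ⟨t, m, cyl_inter h hne⟩
  · refine ⟨s, n, ?_⟩
    rw [Set.inter_comm] at hne ⊢
    exact cyl_inter h hne

lemma coord_mem_gen (i : ℕ) (b : Bool) :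
    MeasurableSet[MeasurableSpace.generateFrom {S : Set (ℕ → Bool) | ∃ s n, S = cylEvent s n}]
      {x : ℕ → Bool | x i = b} := by
  have heq : {x : ℕ → Bool | x i = b} =
      ⋃ u : Fin i → Bool,
        cylEvent (fun j => if h : j < i then u ⟨j, h⟩ else b) (i + 1) := by
    ext x
    simp only [Set.mem_setOf_eq, Set.mem_iUnion]
    constructor
    · intro hx
      refine ⟨fun j => x j.1, fun j hj => ?_⟩
      show x j = if h : j < i then x j else b
      rcases Nat.lt_succ_iff_lt_or_eq.mp hj with h' | rfl
      · simp [h']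
      · simp [hx]
    · rintro ⟨u, hu⟩
      have := hu i (Nat.lt_succ_self i)
      simpa using this
  rw [heq]
  exact MeasurableSet.iUnion fun u =>
    MeasurableSpace.measurableSet_generateFrom ⟨_, _, rfl⟩

lemma generateFrom_cyl :
    (inferInstance : MeasurableSpace (ℕ → Bool)) =
      MeasurableSpace.generateFrom {S : Set (ℕ → Bool) | ∃ s n, S = cylEvent s n} := by
  apply le_antisymm
  · show (⨆ i : ℕ, (inferInstance : MeasurableSpace Bool).comap fun x : ℕ → Bool => x i) ≤ _
    refine iSup_le fun i => ?_
    rw [MeasurableSpace.comap_le_iff_le_map]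
    intro T _
    show MeasurableSet[MeasurableSpace.generateFrom
      {S : Set (ℕ → Bool) | ∃ s n, S = cylEvent s n}] ((fun x : ℕ → Bool => x i) ⁻¹' T)
    have hT : (fun x : ℕ → Bool => x i) ⁻¹' T = ⋃ b ∈ T, {x : ℕ → Bool | x i = b} := by
      ext x; simp
    rw [hT]
    exact MeasurableSet.biUnion T.to_countable fun b _ => coord_mem_gen i b
  · apply MeasurableSpace.generateFrom_le
    rintro _ ⟨s, n, rfl⟩
    exact measurableSet_cylEvent s n

lemma cyl_split (s : ℕ → Bool) (n : ℕ) :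
    cylEvent s n = cylEvent (Function.update s n false) (n + 1) ∪
      cylEvent (Function.update s n true) (n + 1) := by
  ext x
  simp only [cylEvent, Set.mem_setOf_eq, Set.mem_union]
  constructor
  · intro h
    cases hb : x n
    · left
      intro i hi
      rcases Nat.lt_succ_iff_lt_or_eq.mp hi with h' | rfl
      · rw [Function.update_of_ne (Nat.ne_of_lt h')]; exact h i h'
      · rw [Function.update_self]; exact hb
    · right
      intro i hi
      rcases Nat.lt_succ_iff_lt_or_eq.mp hi with h' | rfl
      · rw [Function.update_of_ne (Nat.ne_of_lt h')]; exact h i h'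
      · rw [Function.update_self]; exact hb
  · rintro (h | h) <;> intro i hi <;>
      · have := h i (Nat.lt_succ_of_lt hi)
        rwa [Function.update_of_ne (Nat.ne_of_lt hi)] at this

lemma cyl_split_disjoint (s : ℕ → Bool) (n : ℕ) :
    Disjoint (cylEvent (Function.update s n false) (n + 1))
      (cylEvent (Function.update s n true) (n + 1)) := by
  rw [Set.disjoint_left]
  intro x h1 h2
  have e1 := h1 n (Nat.lt_succ_self n)
  have e2 := h2 n (Nat.lt_succ_self n)
  rw [Function.update_self] at e1 e2
  rw [e1] at e2
  exact Bool.false_ne_true e2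

lemma prod_wt_update (γ : ℕ → ℝ) (s : ℕ → Bool) (n : ℕ) (b : Bool) :
    ∏ i ∈ Finset.range (n + 1), wt γ i (Function.update s n b i) =
      (∏ i ∈ Finset.range n, wt γ i (s i)) * wt γ n b := by
  rw [Finset.prod_range_succ, Function.update_self]
  congr 1
  apply Finset.prod_congr rfl
  intro i hi
  rw [Function.update_of_ne (Nat.ne_of_lt (Finset.mem_range.mp hi))]

/-! ### The key finite-dimensional integral computation -/

lemma lint_Dm {γ : ℕ → ℝ} (hγ : ∀ i, |γ i| < 1/2) (M : Measure (ℕ → Bool))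
    (hM : ∀ (s : ℕ → Bool) (n : ℕ),
      M (cylEvent s n) = ENNReal.ofReal (∏ _i ∈ Finset.range n, (1/2 : ℝ))) :
    ∀ (k : ℕ) (s : ℕ → Bool) (n : ℕ),
      ∫⁻ x in cylEvent s n,
          ENNReal.ofReal (∏ i ∈ Finset.range (n + k), 2 * wt γ i (x i)) ∂M
        = ENNReal.ofReal (∏ i ∈ Finset.range n, wt γ i (s i)) := by
  intro k
  induction k with
  | zero =>
    intro s n
    have hcongr : ∀ᵐ x ∂M, x ∈ cylEvent s n →
        ENNReal.ofReal (∏ i ∈ Finset.range (n + 0), 2 * wt γ i (x i)) =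
          (ENNReal.ofReal (∏ i ∈ Finset.range n, 2 * wt γ i (s i)) : ENNReal) := by
      apply Filter.Eventually.of_forall
      intro x hx
      congr 1
      apply Finset.prod_congr (by simp)
      intro i hi
      rw [hx i (Finset.mem_range.mp (by simpa using hi))]
    rw [setLIntegral_congr_fun_ae (measurableSet_cylEvent s n) hcongr,
      setLIntegral_const, hM]
    rw [← ENNReal.ofReal_mul (Finset.prod_nonneg fun i _ =>
      le_of_lt (by have := wt_pos (hγ i) (s i); linarith))]
    congr 1
    rw [← Finset.prod_mul_distrib]
    apply Finset.prod_congr rfl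
    intro i _
    ring
  | succ k ih =>
    intro s n
    rw [cyl_split s n,
      lintegral_union (measurableSet_cylEvent _ _) (cyl_split_disjoint s n)]
    have harith : n + (k + 1) = (n + 1) + k := by ring
    rw [harith, ih (Function.update s n false) (n + 1), ih (Function.update s n true) (n + 1)]
    rw [prod_wt_update, prod_wt_update]
    have hP : 0 ≤ ∏ i ∈ Finset.range n, wt γ i (s i) :=
      Finset.prod_nonneg fun i _ => le_of_lt (wt_pos (hγ i) (s i))
    have hwf := wt_pos (hγ n) false
    have hwt := wt_pos (hγ n) true
    rw [← ENNReal.ofReal_add (by positivity) (by positivity)]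
    congr 1
    have := wt_false_add_true γ n
    nlinarith [this]

/-! ### Pointwise bounds on the density -/

lemma pointwise_bounds {γ : ℕ → ℝ} (hγ : ∀ i, |γ i| < 1/2)
    (hsum : Summable fun i => |γ i|) (x : ℕ → Bool) (m : ℕ) :
    ENNReal.ofReal (Real.exp (-(kRt γ m))) *
        ENNReal.ofReal (∏ i ∈ Finset.range m, 2 * wt γ i (x i)) ≤ kfE γ x ∧
      kfE γ x ≤ ENNReal.ofReal (Real.exp (kRt γ m)) *
        ENNReal.ofReal (∏ i ∈ Finset.range m, 2 * wt γ i (x i)) := by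
  have hsx : Summable (klg γ x) := klg_summable hγ hsum x
  have hrs : Summable (kr γ) := kr_summable hγ hsum
  have hts : Summable fun i => klg γ x (i + m) := (summable_nat_add_iff m).mpr hsx
  have htrs : Summable fun i => kr γ (i + m) := (summable_nat_add_iff m).mpr hrs
  have htabs : Summable fun i => |klg γ x (i + m)| :=
    Summable.of_nonneg_of_le (fun i => abs_nonneg _)
      (fun i => klg_abs_le (hγ (i + m)) x) htrs
  have htail_le : |∑' i, klg γ x (i + m)| ≤ kRt γ m := by
    calc |∑' i, klg γ x (i + m)| ≤ ∑' i, |klg γ x (i + m)| := by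
          simpa [Real.norm_eq_abs] using norm_tsum_le_tsum_norm (f := fun i => klg γ x (i + m))
            (by simpa [Real.norm_eq_abs] using htabs)
      _ ≤ ∑' i, kr γ (i + m) :=
          Summable.tsum_le_tsum (fun i => klg_abs_le (hγ (i + m)) x) htabs htrs
      _ = kRt γ m := rfl
  have hgx : ∑' i, klg γ x i =
      (∑ i ∈ Finset.range m, klg γ x i) + ∑' i, klg γ x (i + m) :=
    (Summable.sum_add_tsum_nat_add m hsx).symm
  have hP : 0 ≤ ∏ i ∈ Finset.range m, 2 * wt γ i (x i) :=
    Finset.prod_nonneg fun i _ => by have := wt_pos (hγ i) (x i); linarith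
  have hexp : Real.exp (∑' i, klg γ x i) =
      (∏ i ∈ Finset.range m, 2 * wt γ i (x i)) * Real.exp (∑' i, klg γ x (i + m)) := by
    rw [hgx, Real.exp_add]
    congr 1
    rw [Real.exp_sum]
    apply Finset.prod_congr rfl
    intro i _
    exact Real.exp_log (by have := wt_pos (hγ i) (x i); linarith)
  have hexp_le : Real.exp (∑' i, klg γ x (i + m)) ≤ Real.exp (kRt γ m) :=
    Real.exp_le_exp.mpr (le_of_abs_le htail_le)
  have hexp_ge : Real.exp (-(kRt γ m)) ≤ Real.exp (∑' i, klg γ x (i + m)) :=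
    Real.exp_le_exp.mpr (neg_le_of_abs_le htail_le)
  constructor
  · rw [← ENNReal.ofReal_mul (le_of_lt (Real.exp_pos _))]
    apply ENNReal.ofReal_le_ofReal
    rw [hexp]
    nlinarith [Real.exp_pos (-(kRt γ m))]
  · rw [← ENNReal.ofReal_mul (le_of_lt (Real.exp_pos _))]
    apply ENNReal.ofReal_le_ofReal
    rw [hexp]
    nlinarith [Real.exp_pos (kRt γ m)]

/-! ### Main theorem -/

/-- Kakutani: if `|γ_i| < 1/2` for all `i` and `∑ |γ_i| < ∞`, then the product
measure `μ = ⊗ μ_i` with `μ_i({0}) = 1/2 + γ_i`, `μ_i({1}) = 1/2 − γ_i` and the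
uniform Bernoulli product measure `M = ⊗ ν_i` with `ν_i({0}) = ν_i({1}) = 1/2`
are mutually absolutely continuous. -/
theorem kakutani_product_measures_equivalent
    (γ : ℕ → ℝ) (hγ : ∀ i, |γ i| < 1/2) (hsum : Summable fun i => |γ i|)
    (μ M : Measure (ℕ → Bool))
    [IsProbabilityMeasure μ] [IsProbabilityMeasure M]
    (hμ : ∀ (s : ℕ → Bool) (n : ℕ),
      μ (cylEvent s n) = ENNReal.ofReal (∏ i ∈ Finset.range n, wt γ i (s i)))
    (hM : ∀ (s : ℕ → Bool) (n : ℕ),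
      M (cylEvent s n) = ENNReal.ofReal (∏ _i ∈ Finset.range n, (1/2 : ℝ))) :
    μ.AbsolutelyContinuous M ∧ M.AbsolutelyContinuous μ := by
  have hRtend : Filter.Tendsto (kRt γ) Filter.atTop (nhds 0) := tendsto_sum_nat_add (kr γ)
  -- the key cylinder identity for `M.withDensity (kfE γ)`
  have key : ∀ (s : ℕ → Bool) (n : ℕ),
      (M.withDensity (kfE γ)) (cylEvent s n) = μ (cylEvent s n) := by
    intro s n
    rw [withDensity_apply _ (measurableSet_cylEvent s n), hμ]
    set B := ENNReal.ofReal (∏ i ∈ Finset.range n, wt γ i (s i)) with hB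
    have hBfin : B ≠ ⊤ := ENNReal.ofReal_ne_top
    have hub : ∀ m ≥ n, ∫⁻ x in cylEvent s n, kfE γ x ∂M ≤
        ENNReal.ofReal (Real.exp (kRt γ m)) * B := by
      intro m hm
      obtain ⟨k, rfl⟩ := Nat.exists_eq_add_of_le hm
      calc ∫⁻ x in cylEvent s n, kfE γ x ∂M
          ≤ ∫⁻ x in cylEvent s n, ENNReal.ofReal (Real.exp (kRt γ (n + k))) *
              ENNReal.ofReal (∏ i ∈ Finset.range (n + k), 2 * wt γ i (x i)) ∂M :=
            lintegral_mono fun x => (pointwise_bounds hγ hsum x (n + k)).2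
        _ = ENNReal.ofReal (Real.exp (kRt γ (n + k))) *
              ∫⁻ x in cylEvent s n,
                ENNReal.ofReal (∏ i ∈ Finset.range (n + k), 2 * wt γ i (x i)) ∂M :=
            lintegral_const_mul' _ _ ENNReal.ofReal_ne_top
        _ = ENNReal.ofReal (Real.exp (kRt γ (n + k))) * B := by
            rw [lint_Dm hγ M hM k s n]
    have hlb : ∀ m ≥ n, ENNReal.ofReal (Real.exp (-(kRt γ m))) * B ≤
        ∫⁻ x in cylEvent s n, kfE γ x ∂M := by
      intro m hm
      obtain ⟨k, rfl⟩ := Nat.exists_eq_add_of_le hm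
      calc ENNReal.ofReal (Real.exp (-(kRt γ (n + k)))) * B
          = ENNReal.ofReal (Real.exp (-(kRt γ (n + k)))) *
              ∫⁻ x in cylEvent s n,
                ENNReal.ofReal (∏ i ∈ Finset.range (n + k), 2 * wt γ i (x i)) ∂M := by
            rw [lint_Dm hγ M hM k s n]
        _ = ∫⁻ x in cylEvent s n, ENNReal.ofReal (Real.exp (-(kRt γ (n + k)))) *
              ENNReal.ofReal (∏ i ∈ Finset.range (n + k), 2 * wt γ i (x i)) ∂M :=
            (lintegral_const_mul' _ _ ENNReal.ofReal_ne_top).symm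
        _ ≤ ∫⁻ x in cylEvent s n, kfE γ x ∂M :=
            lintegral_mono fun x => (pointwise_bounds hγ hsum x (n + k)).1
    have htend_ub : Filter.Tendsto (fun m => ENNReal.ofReal (Real.exp (kRt γ m)) * B)
        Filter.atTop (nhds B) := by
      have h1 : Filter.Tendsto (fun m => ENNReal.ofReal (Real.exp (kRt γ m)))
          Filter.atTop (nhds 1) := by
        have : Filter.Tendsto (fun m => Real.exp (kRt γ m)) Filter.atTop (nhds 1) := by
          simpa [Function.comp_def] using (Real.continuous_exp.tendsto 0).comp hRtend
        simpa [Function.comp_def] using (ENNReal.continuous_ofReal.tendsto 1).comp this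
      simpa using ENNReal.Tendsto.mul_const h1 (Or.inl one_ne_zero)
    have htend_lb : Filter.Tendsto (fun m => ENNReal.ofReal (Real.exp (-(kRt γ m))) * B)
        Filter.atTop (nhds B) := by
      have h1 : Filter.Tendsto (fun m => ENNReal.ofReal (Real.exp (-(kRt γ m))))
          Filter.atTop (nhds 1) := by
        have h0 : Filter.Tendsto (fun m => -(kRt γ m)) Filter.atTop (nhds 0) := by
          simpa using hRtend.neg
        have : Filter.Tendsto (fun m => Real.exp (-(kRt γ m))) Filter.atTop (nhds 1) := by
          simpa [Function.comp_def] using (Real.continuous_exp.tendsto 0).comp h0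
        simpa [Function.comp_def] using (ENNReal.continuous_ofReal.tendsto 1).comp this
      simpa using ENNReal.Tendsto.mul_const h1 (Or.inl one_ne_zero)
    apply le_antisymm
    · exact ge_of_tendsto htend_ub (Filter.eventually_atTop.mpr ⟨n, hub⟩)
    · exact le_of_tendsto htend_lb (Filter.eventually_atTop.mpr ⟨n, hlb⟩)
  have huniv : (Set.univ : Set (ℕ → Bool)) = cylEvent (fun _ => false) 0 := by
    ext x; simp [cylEvent]
  have hext : μ = M.withDensity (kfE γ) := by
    apply ext_of_generate_finite {S : Set (ℕ → Bool) | ∃ s n, S = cylEvent s n}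
      generateFrom_cyl isPiSystem_cyl
    · rintro _ ⟨s, n, rfl⟩
      exact (key s n).symm
    · rw [huniv]
      exact (key _ 0).symm
  constructor
  · rw [hext]
    exact withDensity_absolutelyContinuous M (kfE γ)
  · apply Measure.AbsolutelyContinuous.mk
    intro A hA h0
    have hAv : ∫⁻ x in A, kfE γ x ∂M = 0 := by
      rw [← withDensity_apply _ hA, ← hext]
      exact h0
    have hlow : ∀ x : ℕ → Bool, ENNReal.ofReal (Real.exp (-(kRt γ 0))) ≤ kfE γ x := by
      intro x
      have := (pointwise_bounds hγ hsum x 0).1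
      simpa using this
    have hle : ENNReal.ofReal (Real.exp (-(kRt γ 0))) * M A ≤ ∫⁻ x in A, kfE γ x ∂M := by
      rw [← setLIntegral_const A _]
      exact lintegral_mono fun x => hlow x
    rw [hAv] at hle
    have hc : ENNReal.ofReal (Real.exp (-(kRt γ 0))) ≠ 0 :=
      (ENNReal.ofReal_pos.mpr (Real.exp_pos _)).ne'
    have hz : ENNReal.ofReal (Real.exp (-(kRt γ 0))) * M A = 0 := le_antisymm hle (zero_le)
    rcases mul_eq_zero.mp hz with h | h
    · exact absurd h hc
    · exact h
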